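/- Let h_1,…,h_n be classifiers whose errors on m i.i.d. samples are mutually independent, with P(h_1 errs on any one sample)=α and P(h_i errs)=pα for i≥2, where p≤1/4 and α∈(0,1/2). If 2/m ≤ α ≤ (3 log(n/5))/(4pm), then P(h_1 makes at least one error on the sample AND some h_i, i≥2, makes zero errors) ≥ 1/2. -/
import Mathlib


set_option maxHeartbeats 1600000 in
/-- Classifiers `h_1, …, h_n` err independently on each of `m` i.i.d. samples, `h_1` with
probability `α`, each `h_i` (`i ≥ 2`) with probability `p·α`.  The probability that `h_1` makes
at least one error while some `h_i`, `i ≥ 2`, makes zero errors is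
`(1 - (1-α)^m) * (1 - (1 - (1-pα)^m)^(n-1))`.  If `p ≤ 1/4`, `α ∈ (0,1/2)` and
`2/m ≤ α ≤ 3 log(n/5) / (4pm)`, this probability is at least `1/2`. -/
theorem stmt9 (m n : ℕ) (p α : ℝ)
    (hp0 : 0 < p) (hp : p ≤ 1 / 4)
    (hα0 : 0 < α) (hα1 : α < 1 / 2)
    (hlow : 2 / (m : ℝ) ≤ α)
    (hhigh : α ≤ 3 * Real.log ((n : ℝ) / 5) / (4 * p * m)) :
    (1 / 2 : ℝ) ≤ (1 - (1 - α) ^ m) * (1 - (1 - (1 - p * α) ^ m) ^ (n - 1)) := by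
  set L := Real.log ((n : ℝ) / 5) with hLdef
  have hm : 0 < m := by
    rcases Nat.eq_zero_or_pos m with h | h
    · subst h; simp at hhigh; linarith
    · exact h
  have hm' : (0:ℝ) < m := by exact_mod_cast hm
  have hL : 0 < L := by
    by_contra h
    push_neg at h
    have h2 : 3 * L / (4 * p * (m:ℝ)) ≤ 0 :=
      div_nonpos_of_nonpos_of_nonneg (by linarith) (by positivity)
    linarith
  have hN5 : (5:ℝ) < (n:ℝ) := by
    by_contra h
    push_neg at h
    have h2 : L ≤ 0 := Real.log_nonpos (by positivity)
      (by rw [div_le_one (by norm_num : (0:ℝ) < 5)]; linarith)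
    linarith
  have hn6 : 6 ≤ n := by
    have : (5:ℕ) < n := by exact_mod_cast hN5
    omega
  have hn6' : (6:ℝ) ≤ (n:ℝ) := by exact_mod_cast hn6
  have hαm : 2 ≤ α * m := by
    rw [div_le_iff₀ hm'] at hlow; linarith
  have hpαm : p * α * m ≤ 3/4 * L := by
    rw [le_div_iff₀ (by positivity)] at hhigh
    nlinarith
  have hpα8 : p * α ≤ 1/8 := by nlinarith
  have hpα0 : 0 < p * α := mul_pos hp0 hα0
  have h1α : (0:ℝ) ≤ 1 - α := by linarith
  -- First factor: (1-α)^m ≤ exp(-2) ≤ 0.14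
  have e1 : (1 - α)^m ≤ Real.exp (-(α*m)) := by
    calc (1-α)^m ≤ (Real.exp (-α))^m :=
          pow_le_pow_left₀ h1α (by linarith [Real.add_one_le_exp (-α)]) m
      _ = Real.exp (-(α*m)) := by
          rw [← Real.exp_nat_mul]; congr 1; ring
  have hexp2 : Real.exp (-(α*m)) ≤ Real.exp (-2) := Real.exp_le_exp.mpr (by linarith)
  have hexp2pow : (50/7 : ℝ) ≤ Real.exp 2 := by
    have h4 : Real.exp 2 = (Real.exp 1)^2 := by
      rw [← Real.exp_nat_mul]; norm_num
    have h5 : ((2.7182818283:ℝ))^2 ≤ (Real.exp 1)^2 :=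
      pow_le_pow_left₀ (by norm_num) Real.exp_one_gt_d9.le 2
    rw [h4]; nlinarith
  have hexp2' : Real.exp (-2) ≤ 0.14 := by
    rw [Real.exp_neg]
    have h6 : (Real.exp 2)⁻¹ ≤ (50/7 : ℝ)⁻¹ :=
      inv_anti₀ (by norm_num) hexp2pow
    calc (Real.exp 2)⁻¹ ≤ (50/7:ℝ)⁻¹ := h6
      _ ≤ 0.14 := by norm_num
  have hA : (0.86:ℝ) ≤ 1 - (1-α)^m := by
    have := (e1.trans hexp2).trans hexp2'
    linarith
  -- Second factor
  have h1pα : (0:ℝ) ≤ 1 - p*α := by linarith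
  have ht0 : (0:ℝ) ≤ (1-p*α)^m := pow_nonneg h1pα m
  have ht1 : (1-p*α)^m ≤ 1 := pow_le_one₀ h1pα (by linarith)
  have key : Real.exp (-(8/7 * (p*α))) ≤ 1 - p*α := by
    have h1 := Real.add_one_le_exp (8/7 * (p*α))
    have hpos : (0:ℝ) < 1 - p*α := by linarith
    rw [Real.exp_neg, inv_eq_one_div, div_le_iff₀ (Real.exp_pos _)]
    nlinarith [mul_le_mul_of_nonneg_left h1 hpos.le]
  have e2 : Real.exp (-(6/7 * L)) ≤ (1 - p*α)^m := by
    calc Real.exp (-(6/7*L)) ≤ Real.exp (-(8/7*(p*α)) * m) := by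
          apply Real.exp_le_exp.mpr
          nlinarith
      _ = (Real.exp (-(8/7*(p*α))))^m := by
          rw [← Real.exp_nat_mul]; congr 1; ring
      _ ≤ (1-p*α)^m := pow_le_pow_left₀ (Real.exp_pos _).le key m
  have hexpL : Real.exp L = (n:ℝ)/5 := Real.exp_log (by linarith)
  have ht7 : (5:ℝ)^6 / (n:ℝ)^6 ≤ ((1-p*α)^m)^7 := by
    have h1 : (Real.exp (-(6/7*L)))^7 ≤ ((1-p*α)^m)^7 :=
      pow_le_pow_left₀ (Real.exp_pos _).le e2 7
    have h2 : (Real.exp (-(6/7*L)))^7 = (Real.exp (-L))^6 := by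
      rw [← Real.exp_nat_mul, ← Real.exp_nat_mul]; congr 1; ring
    have h3 : Real.exp (-L) = 5/(n:ℝ) := by
      rw [Real.exp_neg, hexpL, inv_div]
    rw [h2, h3] at h1
    calc (5:ℝ)^6/(n:ℝ)^6 = (5/(n:ℝ))^6 := by rw [div_pow]
      _ ≤ _ := h1
  have hNpos : (0:ℝ) < (n:ℝ) := by linarith
  have hs : (4:ℝ) ≤ ((n:ℝ)-1) * (1-p*α)^m := by
    have hs0 : (0:ℝ) ≤ ((n:ℝ)-1) * (1-p*α)^m := mul_nonneg (by linarith) ht0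
    refine le_of_pow_le_pow_left₀ (n := 7) (by norm_num) hs0 ?_
    have hre : (((n:ℝ)-1)*(1-p*α)^m)^7 = ((n:ℝ)-1)^7 * ((1-p*α)^m)^7 := by ring
    rw [hre]
    have hN1 : (5/6) * (n:ℝ) ≤ (n:ℝ) - 1 := by linarith
    have h7 : ((5/6)*(n:ℝ))^7 ≤ ((n:ℝ)-1)^7 := pow_le_pow_left₀ (by positivity) hN1 7
    have key2 : (4:ℝ)^7 ≤ ((n:ℝ)-1)^7 * (5^6/(n:ℝ)^6) := by
      rw [mul_div_assoc', le_div_iff₀ (by positivity)]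
      nlinarith [h7, mul_le_mul_of_nonneg_right hn6' (pow_nonneg hNpos.le 6),
        pow_nonneg hNpos.le 6]
    calc (4:ℝ)^7 ≤ ((n:ℝ)-1)^7 * (5^6/(n:ℝ)^6) := key2
      _ ≤ ((n:ℝ)-1)^7 * ((1-p*α)^m)^7 :=
          mul_le_mul_of_nonneg_left ht7 (pow_nonneg (by linarith) 7)
  have hncast : ((n-1 : ℕ):ℝ) = (n:ℝ) - 1 := by
    have h1 : 1 ≤ n := by omega
    push_cast [Nat.cast_sub h1]
    ring
  have hB : (1 - (1-p*α)^m)^(n-1) ≤ Real.exp (-4) := by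
    have h1 : (0:ℝ) ≤ 1 - (1-p*α)^m := by linarith
    calc (1 - (1-p*α)^m)^(n-1) ≤ (Real.exp (-((1-p*α)^m)))^(n-1) :=
          pow_le_pow_left₀ h1 (by linarith [Real.add_one_le_exp (-((1-p*α)^m))]) _
      _ = Real.exp (-(((n-1:ℕ):ℝ) * (1-p*α)^m)) := by
          rw [← Real.exp_nat_mul]; congr 1; ring
      _ ≤ Real.exp (-4) := by
          apply Real.exp_le_exp.mpr
          rw [hncast]
          linarith
  have hexp4pow : (50:ℝ) ≤ Real.exp 4 := by
    have h4 : Real.exp 4 = (Real.exp 1)^4 := by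
      rw [← Real.exp_nat_mul]; norm_num
    have h5 : ((2.7182818283:ℝ))^4 ≤ (Real.exp 1)^4 :=
      pow_le_pow_left₀ (by norm_num) Real.exp_one_gt_d9.le 4
    rw [h4]; nlinarith
  have hexp4 : Real.exp (-4) ≤ 0.02 := by
    rw [Real.exp_neg]
    have h6 : (Real.exp 4)⁻¹ ≤ (50:ℝ)⁻¹ := inv_anti₀ (by norm_num) hexp4pow
    calc (Real.exp 4)⁻¹ ≤ (50:ℝ)⁻¹ := h6
      _ ≤ 0.02 := by norm_num
  have hB' : (0.98:ℝ) ≤ 1 - (1-(1-p*α)^m)^(n-1) := by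
    have := hB.trans hexp4
    linarith
  nlinarith [mul_nonneg (by linarith : (0:ℝ) ≤ 1 - (1-α)^m - 0.86)
    (by linarith : (0:ℝ) ≤ 1 - (1-(1-p*α)^m)^(n-1) - 0.98)]
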